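/- For the inner product function IP on n-bit strings, the number of 0-entries of M_IP is 2^{2n−1} + 2^{n−1} and the number of 1-entries is 2^{2n−1} − 2^{n−1}; combined with the bound that every 0-rectangle has size at most 2ⁿ, this yields C₀ᴰ(IP) > 2^{n−1}. -/

import Mathlib

/-- The inner product function: `IP x y = ⟨x,y⟩ mod 2`. -/
def IP {n : ℕ} (x y : Fin n → Bool) : Bool :=
  decide ((Finset.univ.filter fun i => x i = true ∧ y i = true).card % 2 = 1)

open Finset

noncomputable def dotB (n : ℕ) : LinearMap.BilinForm (ZMod 2) (Fin n → ZMod 2) :=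
  LinearMap.mk₂ (ZMod 2) (fun x y => ∑ i, x i * y i)
    (by intros; simp [add_mul, Finset.sum_add_distrib])
    (by intros; simp [Finset.mul_sum, mul_assoc])
    (by intros; simp [mul_add, Finset.sum_add_distrib])
    (by intros; simp [Finset.mul_sum]; ring_nf; simp [mul_assoc, mul_comm, mul_left_comm])

lemma dotB_apply {n : ℕ} (x y : Fin n → ZMod 2) : dotB n x y = ∑ i, x i * y i := rfl

lemma dotB_symm {n : ℕ} : (dotB n).IsSymm := by
  rw [LinearMap.BilinForm.isSymm_def]
  intro x y; simp [dotB_apply, mul_comm]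

lemma dotB_refl {n : ℕ} : (dotB n).IsRefl := dotB_symm.isRefl

lemma dotB_nondeg {n : ℕ} : (dotB n).Nondegenerate := by
  refine ⟨fun x hx => ?_, fun x hx => ?_⟩
  all_goals
  funext i
  have := hx (Pi.single i 1)
  rw [dotB_apply, Finset.sum_eq_single i] at this
  · simpa using this
  · intro j _ hj; simp [Pi.single_apply, hj]
  · simp

def bv {n : ℕ} (x : Fin n → Bool) : Fin n → ZMod 2 := fun i => if x i then 1 else 0

lemma bv_inj {n : ℕ} : Function.Injective (bv (n := n)) := by
  intro x y h
  funext i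
  have := congrFun h i
  by_cases hx : x i <;> by_cases hy : y i <;> simp_all [bv]

lemma IP_false_iff {n : ℕ} (x y : Fin n → Bool) :
    IP x y = false ↔ dotB n (bv x) (bv y) = 0 := by
  have hsum : dotB n (bv x) (bv y) =
      ((Finset.univ.filter fun i => x i = true ∧ y i = true).card : ZMod 2) := by
    rw [dotB_apply, Finset.card_filter]
    push_cast
    apply Finset.sum_congr rfl
    intro i _
    by_cases hx : x i <;> by_cases hy : y i <;> simp [bv, hx, hy]
  rw [hsum, IP]
  rw [ZMod.natCast_eq_zero_iff]
  simp only [decide_eq_false_iff_not]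
  omega

lemma rect_bound {n : ℕ} (I J : Finset (Fin n → Bool))
    (h : ∀ x ∈ I, ∀ y ∈ J, IP x y = false) : I.card * J.card ≤ 2 ^ n := by
  classical
  set W : Submodule (ZMod 2) (Fin n → ZMod 2) := Submodule.span (ZMod 2) (I.image bv : Set _)
  have hIW : ∀ x ∈ I, bv x ∈ W := fun x hx =>
    Submodule.subset_span (by simpa using Finset.mem_image_of_mem bv hx)
  have hJW : ∀ y ∈ J, bv y ∈ (dotB n).orthogonal W := by
    intro y hy
    rw [LinearMap.BilinForm.mem_orthogonal_iff]
    intro m hm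
    induction hm using Submodule.span_induction with
    | mem z hz =>
      obtain ⟨x, hx, rfl⟩ := by simpa using hz
      have := (IP_false_iff x y).mp (h x hx y hy)
      exact this
    | zero => simp [LinearMap.BilinForm.IsOrtho]
    | add a b _ _ ha hb => simp_all [LinearMap.BilinForm.IsOrtho]
    | smul c a _ ha => simp_all [LinearMap.BilinForm.IsOrtho]
  have hd : Module.finrank (ZMod 2) W ≤ n := by
    have := Submodule.finrank_le W
    simpa using this
  have cardW : Fintype.card W = 2 ^ Module.finrank (ZMod 2) W := by
    simpa using Module.card_eq_pow_finrank (K := ZMod 2) (V := W)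
  have cardO : Fintype.card ((dotB n).orthogonal W) = 2 ^ (n - Module.finrank (ZMod 2) W) := by
    have h1 := Module.card_eq_pow_finrank (K := ZMod 2) (V := ((dotB n).orthogonal W))
    rw [h1, LinearMap.BilinForm.finrank_orthogonal dotB_nondeg]
    simp [ZMod.card]
  have subcard : ∀ (U : Submodule (ZMod 2) (Fin n → ZMod 2)) (s : Finset (Fin n → Bool)),
      (∀ x ∈ s, bv x ∈ U) → s.card ≤ Fintype.card U := by
    intro U s hs
    have h1 : s.card = (s.image bv).card := (Finset.card_image_of_injective s bv_inj).symm
    rw [h1]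
    have h2 : s.image bv ⊆ (U : Set _).toFinset := by
      intro x hx
      rcases Finset.mem_image.mp hx with ⟨a, ha, rfl⟩
      simpa using hs a ha
    calc (s.image bv).card ≤ (U : Set _).toFinset.card := Finset.card_le_card h2
      _ = Fintype.card U := by simp
  calc I.card * J.card ≤ Fintype.card W * Fintype.card ((dotB n).orthogonal W) :=
        Nat.mul_le_mul (subcard W I hIW) (subcard _ J hJW)
    _ = 2 ^ Module.finrank (ZMod 2) W * 2 ^ (n - Module.finrank (ZMod 2) W) := by
        rw [cardW, cardO]
    _ = 2 ^ n := by rw [← pow_add]; congr 1; omega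

lemma IP_flip {n : ℕ} (x y : Fin n → Bool) (i0 : Fin n) (hx : x i0 = true) :
    IP x (Function.update y i0 (!y i0)) = ! IP x y := by
  classical
  set S := Finset.univ.filter fun i => x i = true ∧ y i = true with hS
  set y' := Function.update y i0 (!y i0) with hy'
  have key : (Finset.univ.filter fun i => x i = true ∧ y' i = true).card % 2
      = (S.card + 1) % 2 := by
    by_cases h0 : y i0 = true
    · have he : (Finset.univ.filter fun i => x i = true ∧ y' i = true) = S.erase i0 := by
        ext i
        by_cases hi : i = i0 <;>
          simp [hy', Function.update_apply, hi, hS, h0, hx]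
      rw [he, Finset.card_erase_of_mem (by simp [hS, hx, h0])]
      have h1 : 1 ≤ S.card := Finset.card_pos.mpr ⟨i0, by simp [hS, hx, h0]⟩
      omega
    · have he : (Finset.univ.filter fun i => x i = true ∧ y' i = true) = insert i0 S := by
        ext i
        by_cases hi : i = i0 <;>
          simp [hy', Function.update_apply, hi, hS, h0, hx]
      rw [he, Finset.card_insert_of_notMem (by simp [hS, h0])]
  simp only [IP, key, ← hS]
  rcases Nat.mod_two_eq_zero_or_one S.card with h | h <;> simp [Nat.add_mod, h]

lemma row_count_ne {n : ℕ} (hn : 1 ≤ n) (x : Fin n → Bool) (hx : x ≠ fun _ => false) :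
    (Finset.univ.filter fun y => IP x y = false).card = 2 ^ (n - 1) := by
  classical
  obtain ⟨i0, hi0⟩ : ∃ i, x i = true := by
    by_contra hc
    push_neg at hc
    exact hx (funext fun i => by simpa using hc i)
  have heq : (Finset.univ.filter fun y => IP x y = false).card
      = (Finset.univ.filter fun y => IP x y = true).card := by
    apply Finset.card_bij' (fun y _ => Function.update y i0 (!y i0))
      (fun y _ => Function.update y i0 (!y i0))
    · intro y _
      simp [Function.update_idem]
    · intro y _
      simp [Function.update_idem]
    · intro y hy
      simp only [Finset.mem_filter, Finset.mem_univ, true_and] at hy ⊢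
      rw [IP_flip x y i0 hi0, hy]; rfl
    · intro y hy
      simp only [Finset.mem_filter, Finset.mem_univ, true_and] at hy ⊢
      rw [IP_flip x y i0 hi0, hy]; rfl
  have htot : (Finset.univ.filter fun y => IP x y = false).card
      + (Finset.univ.filter fun y => IP x y = true).card = 2 ^ n := by
    have h := Finset.card_filter_add_card_filter_not
      (s := (Finset.univ : Finset (Fin n → Bool))) (p := fun y => IP x y = false)
    have hne : (Finset.univ.filter fun a => ¬ IP x a = false)
        = (Finset.univ.filter fun y => IP x y = true) := by
      ext y; simp
    rw [hne] at h
    rw [h]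
    simp
  have hpow : 2 ^ n = 2 * 2 ^ (n - 1) := by
    rw [← pow_succ']
    congr 1
    omega
  omega

lemma row_count_zero {n : ℕ} :
    (Finset.univ.filter fun y => IP (fun _ => false : Fin n → Bool) y = false).card = 2 ^ n := by
  have : ∀ y : Fin n → Bool, IP (fun _ => false : Fin n → Bool) y = false := by
    intro y
    simp [IP]
  simp [this]

lemma zeros_card {n : ℕ} (hn : 1 ≤ n) :
    ((Finset.univ : Finset ((Fin n → Bool) × (Fin n → Bool))).filter
        (fun p => IP p.1 p.2 = false)).card = 2 ^ (2 * n - 1) + 2 ^ (n - 1) := by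
  classical
  set Z := ((Finset.univ : Finset ((Fin n → Bool) × (Fin n → Bool))).filter
      (fun p => IP p.1 p.2 = false)) with hZ
  have hcard : Z.card = ∑ x : Fin n → Bool, (Z.filter fun p => p.1 = x).card :=
    Finset.card_eq_sum_card_fiberwise (fun p _ => Finset.mem_univ p.1)
  have hfib : ∀ x : Fin n → Bool, (Z.filter fun p => p.1 = x)
      = {x} ×ˢ (Finset.univ.filter fun y => IP x y = false) := by
    intro x
    ext ⟨a, b⟩
    simp only [hZ, Finset.mem_filter, Finset.mem_univ, true_and, Finset.mem_product,
      Finset.mem_singleton]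
    constructor
    · rintro ⟨h1, rfl⟩; exact ⟨rfl, h1⟩
    · rintro ⟨rfl, h1⟩; exact ⟨h1, rfl⟩
  have hfibc : ∀ x : Fin n → Bool, (Z.filter fun p => p.1 = x).card
      = (Finset.univ.filter fun y => IP x y = false).card := by
    intro x
    rw [hfib x, Finset.card_product, Finset.card_singleton, one_mul]
  rw [hcard]
  simp only [hfibc]
  set c : Fin n → Bool := fun _ => false with hc
  rw [← Finset.add_sum_erase _ _ (Finset.mem_univ c)]
  have h1 : (Finset.univ.filter fun y => IP c y = false).card = 2 ^ n := row_count_zero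
  have h2 : ∑ x ∈ Finset.univ.erase c, (Finset.univ.filter fun y => IP x y = false).card
      = (2 ^ n - 1) * 2 ^ (n - 1) := by
    rw [Finset.sum_congr rfl (fun x hx => row_count_ne hn x (Finset.mem_erase.mp hx).1)]
    rw [Finset.sum_const, Finset.card_erase_of_mem (Finset.mem_univ c)]
    simp [mul_comm]
  rw [h1, h2]
  have hp1 : 2 ^ n = 2 * 2 ^ (n - 1) := by rw [← pow_succ']; congr 1; omega
  have hp2 : 2 ^ (2 * n - 1) = 2 ^ n * 2 ^ (n - 1) := by rw [← pow_add]; congr 1; omega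
  have hp3 : 1 ≤ 2 ^ (n - 1) := Nat.one_le_two_pow
  have hp4 : (2 ^ n - 1) * 2 ^ (n - 1) = 2 ^ n * 2 ^ (n - 1) - 2 ^ (n - 1) := by
    rw [Nat.sub_mul, one_mul]
  have hp5 : 2 ^ (n - 1) ≤ 2 ^ n * 2 ^ (n - 1) := Nat.le_mul_of_pos_left _ (by positivity)
  omega

/-- The matrix of `IP` has `2^{2n−1} + 2^{n−1}` zero entries and `2^{2n−1} − 2^{n−1}` one
entries; combined with the bound `2ⁿ` on the size of 0-rectangles, any partition of the
matrix into monochromatic rectangles contains more than `2^{n−1}` (nonempty)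
0-rectangles, i.e. `C₀ᴰ(IP) > 2^{n−1}`. -/
theorem IP_zero_rectangles_bound (n : ℕ) (hn : 1 ≤ n) :
    ((Finset.univ : Finset ((Fin n → Bool) × (Fin n → Bool))).filter
        (fun p => IP p.1 p.2 = false)).card = 2 ^ (2 * n - 1) + 2 ^ (n - 1) ∧
    ((Finset.univ : Finset ((Fin n → Bool) × (Fin n → Bool))).filter
        (fun p => IP p.1 p.2 = true)).card = 2 ^ (2 * n - 1) - 2 ^ (n - 1) ∧
    ∀ (k : ℕ) (R : Fin k → Finset ((Fin n → Bool) × (Fin n → Bool))),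
      (∀ i, ∃ (I J : Finset (Fin n → Bool)), R i = I ×ˢ J) →
      (∀ i, ∀ p ∈ R i, ∀ q ∈ R i, IP p.1 p.2 = IP q.1 q.2) →
      (∀ p, ∃! i, p ∈ R i) →
      2 ^ (n - 1) <
        (Finset.univ.filter fun i : Fin k =>
          (R i).Nonempty ∧ ∀ p ∈ R i, IP p.1 p.2 = false).card := by
  classical
  have hz := zeros_card (n := n) hn
  refine ⟨hz, ?_, ?_⟩
  · have h := Finset.card_filter_add_card_filter_not
      (s := (Finset.univ : Finset ((Fin n → Bool) × (Fin n → Bool))))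
      (p := fun p => IP p.1 p.2 = false)
    have hne : ((Finset.univ : Finset ((Fin n → Bool) × (Fin n → Bool))).filter
          fun p => ¬ IP p.1 p.2 = false)
        = ((Finset.univ : Finset ((Fin n → Bool) × (Fin n → Bool))).filter
          fun p => IP p.1 p.2 = true) := by
      ext p; simp
    rw [hne, hz] at h
    have hcu : ((Finset.univ : Finset ((Fin n → Bool) × (Fin n → Bool)))).card
        = 2 * 2 ^ (2 * n - 1) := by
      simp only [Finset.card_univ, Fintype.card_prod, Fintype.card_fun, Fintype.card_bool,
        Fintype.card_fin]
      rw [← pow_add, ← pow_succ']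
      congr 1
      omega
    rw [hcu] at h
    omega
  · intro k R hrect hmono hpart
    by_contra hle
    push_neg at hle
    set S := Finset.univ.filter fun i : Fin k =>
      (R i).Nonempty ∧ ∀ p ∈ R i, IP p.1 p.2 = false with hS
    set Z := ((Finset.univ : Finset ((Fin n → Bool) × (Fin n → Bool))).filter
        (fun p => IP p.1 p.2 = false)) with hZdef
    have hsub : Z ⊆ S.biUnion R := by
      intro p hp
      have hpf : IP p.1 p.2 = false := (Finset.mem_filter.mp hp).2
      obtain ⟨i, hi, -⟩ := hpart p
      refine Finset.mem_biUnion.mpr ⟨i, ?_, hi⟩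
      rw [hS, Finset.mem_filter]
      exact ⟨Finset.mem_univ i, ⟨p, hi⟩, fun q hq => (hmono i q hq p hi).trans hpf⟩
    have hbound : ∀ i ∈ S, (R i).card ≤ 2 ^ n := by
      intro i hi
      obtain ⟨I, J, hIJ⟩ := hrect i
      have hzero : ∀ p ∈ R i, IP p.1 p.2 = false := (Finset.mem_filter.mp hi).2.2
      rw [hIJ, Finset.card_product]
      apply rect_bound
      intro x hx y hy
      exact hzero (x, y) (by rw [hIJ]; exact Finset.mk_mem_product hx hy)
    have hZle : Z.card ≤ S.card * 2 ^ n :=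
      calc Z.card ≤ (S.biUnion R).card := Finset.card_le_card hsub
        _ ≤ ∑ i ∈ S, (R i).card := Finset.card_biUnion_le
        _ ≤ S.card * 2 ^ n := Finset.sum_le_card_nsmul S _ _ hbound
    have hle2 : S.card * 2 ^ n ≤ 2 ^ (n - 1) * 2 ^ n := Nat.mul_le_mul_right _ hle
    have hp1 : 2 ^ (n - 1) * 2 ^ n = 2 ^ (2 * n - 1) := by rw [← pow_add]; congr 1; omega
    have hp3 : 1 ≤ 2 ^ (n - 1) := Nat.one_le_two_pow
    omega
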